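/- Limit form of the belief clipping lemma for nonnegative rewards: in a POMDP with reward function R satisfying R(s,α,s') ≥ 0 for all s, α, s' and observable goal set G, let b be a belief over S with an observation, let μ be a belief clip for b with Δ := Σμ, and let b̃ := b ⊖ μ. Then, with V*(c) := ⨆_{n∈ℕ} V_n(c) and U*(s) := ⨆_{n∈ℕ} U_n(s) taken in [0,∞], it holds that (1 − Δ)·V*(b̃) + ∑_{s∈S} μ(s)·U*(s) ≤ V*(b). -/

import Mathlib

open Finset

attribute [local instance] Classical.propDecidable

noncomputable section

/-- A belief over a finite type `S`: a nonnegative function summing to one. -/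
def IsBelief {S : Type} [Fintype S] (b : S → ℝ) : Prop :=
  (∀ s, 0 ≤ b s) ∧ (∑ s, b s = 1)

/-- A belief clip for a belief `b`: `0 ≤ μ(s) ≤ b(s)` pointwise and `Σμ < 1`. -/
def IsBeliefClip {S : Type} [Fintype S] (b μ : S → ℝ) : Prop :=
  (∀ s, 0 ≤ μ s ∧ μ s ≤ b s) ∧ (∑ s, μ s < 1)

/-- The induced function `b ⊖ μ`, defined by `(b ⊖ μ)(s) = (b(s) − μ(s)) / (1 − Σμ)`. -/
def clipped {S : Type} [Fintype S] (b μ : S → ℝ) : S → ℝ :=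
  fun s => (b s - μ s) / (1 - ∑ s', μ s')

variable {S Act Z : Type}

/-- The set of actions enabled in state `s`: those whose outgoing probabilities sum to 1. -/
def enabledA [Fintype S] [Fintype Act] (P : S → Act → S → ℝ) (s : S) : Finset Act :=
  univ.filter fun α => ∑ s' : S, P s α s' = 1

/-- The actions enabled at an observation `z`: `Act(z) = Act(s)` for some `s` with `O s = z`. -/
def obsEnabled [Fintype S] [Fintype Act] (O : S → Z) (P : S → Act → S → ℝ) (z : Z) :
    Finset Act :=
  if h : ∃ s, O s = z then enabledA P h.choose else ∅

/-- The POMDP assumptions on the observation function `O` and the transition function `P`: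
nonnegative transition probabilities, each state-action row sums to 0 or 1, every state has
some enabled action, and equally-observed states have equal enabled actions. -/
def IsPOMDP [Fintype S] [Fintype Act] (O : S → Z) (P : S → Act → S → ℝ) : Prop :=
  (∀ s α s', 0 ≤ P s α s') ∧
  (∀ s α, (∑ s', P s α s') = 0 ∨ (∑ s', P s α s') = 1) ∧
  (∀ s, (enabledA P s).Nonempty) ∧
  (∀ s s', O s = O s' → enabledA P s = enabledA P s')

/-- `b` has observation `z`: the support of `b` is contained in `O⁻¹(z)`. -/
def HasObs (O : S → Z) (b : S → ℝ) (z : Z) : Prop :=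
  ∀ s, 0 < b s → O s = z

/-- `P(s,α,z)`: probability to observe `z` after taking `α` in state `s`. -/
def Pso [Fintype S] (O : S → Z) (P : S → Act → S → ℝ) (s : S) (α : Act) (z : Z) : ℝ :=
  ∑ s' : S, if O s' = z then P s α s' else 0

/-- `P(b,α,z)`: probability to observe `z` after taking `α` in belief `b`. -/
def Pbo [Fintype S] (O : S → Z) (P : S → Act → S → ℝ) (b : S → ℝ) (α : Act) (z : Z) : ℝ :=
  ∑ s : S, b s * Pso O P s α z

/-- The successor belief `⟦b|α,z⟧`. -/
def succB [Fintype S] (O : S → Z) (P : S → Act → S → ℝ) (b : S → ℝ) (α : Act) (z : Z) :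
    S → ℝ :=
  fun s => if O s = z then (∑ s' : S, b s' * P s' α s) / Pbo O P b α z else 0

/-- The belief reward `R(b,α,z)`. -/
def Rbel [Fintype S] (O : S → Z) (P R : S → Act → S → ℝ) (b : S → ℝ) (α : Act) (z : Z) : ℝ :=
  (∑ s : S, b s * ∑ s' : S, if O s' = z then R s α s' * P s α s' else 0) / Pbo O P b α z

/-- The last observation of a finite observation trace `z₀ α₁ z₁ … αₙ zₙ`,
represented as the pair of `z₀` and the list `[(α₁,z₁),…,(αₙ,zₙ)]`. -/
def lastObs (τ : Z × List (Act × Z)) : Z :=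
  (τ.2.getLast?.map Prod.snd).getD τ.1

/-- An observation-based policy: to each finite observation trace it assigns a probability
distribution over actions supported on the actions enabled at the last observation. -/
def IsObsPolicy [Fintype S] [Fintype Act] (O : S → Z) (P : S → Act → S → ℝ)
    (σ : Z × List (Act × Z) → Act → ℝ) : Prop :=
  ∀ τ, (∀ α, 0 ≤ σ τ α) ∧ (∑ α, σ τ α = 1) ∧
    (∀ α, σ τ α ≠ 0 → ∀ s, O s = lastObs τ → α ∈ enabledA P s)

/-- The shifted policy `σ⇝(z,α)`, behaving as `σ` after observing `z` and taking `α`. -/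
def shiftPol (σ : Z × List (Act × Z) → Act → ℝ) (z : Z) (α : Act) :
    Z × List (Act × Z) → Act → ℝ :=
  fun τ => σ (z, (α, τ.1) :: τ.2)

/-- Goal states are observable: membership in `G` is determined by the observation. -/
def ObservableGoal (O : S → Z) (G : Set S) : Prop :=
  ∃ Z' : Set Z, ∀ s, s ∈ G ↔ O s ∈ Z'

/-- The `n`-step state values `W_n^σ` under an observation-based policy `σ`. -/
def Wval [Fintype S] [Fintype Act] (O : S → Z) (P R : S → Act → S → ℝ) (G : Set S) :
    ℕ → (Z × List (Act × Z) → Act → ℝ) → S → ℝ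
  | 0, _, _ => 0
  | n+1, σ, s =>
    if s ∈ G then 0
    else ∑ α ∈ enabledA P s, σ (O s, []) α *
      ∑ s' : S, P s α s' * (R s α s' + Wval O P R G n (shiftPol σ (O s) α) s')

/-- The `n`-step belief values `V_n^σ(b)` under policy `σ`, for a belief `b` with
observation `z`. -/
def Vpol [Fintype S] [Fintype Act] [Fintype Z] (O : S → Z) (P R : S → Act → S → ℝ)
    (G : Set S) :
    ℕ → (Z × List (Act × Z) → Act → ℝ) → (S → ℝ) → Z → ℝ
  | 0, _, _, _ => 0
  | n+1, σ, b, z =>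
    if ∀ s, 0 < b s → s ∈ G then 0
    else ∑ α ∈ obsEnabled O P z, σ (z, []) α *
      ∑ z' ∈ univ.filter (fun z' => 0 < Pbo O P b α z'),
        Pbo O P b α z' *
          (Rbel O P R b α z' + Vpol O P R G n (shiftPol σ z α) (succB O P b α z') z')

/-- Maximum of `f` over a finite set (0 for the empty set). -/
def maxOver {α : Type} (t : Finset α) (f : α → ℝ) : ℝ :=
  if h : t.Nonempty then t.sup' h f else 0

/-- Minimum of `f` over a finite set (0 for the empty set). -/
def minOver {α : Type} (t : Finset α) (f : α → ℝ) : ℝ :=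
  if h : t.Nonempty then t.inf' h f else 0

/-- The `n`-step optimal belief values `V_n(b)`, for a belief `b` with observation `z`. -/
def Vopt [Fintype S] [Fintype Act] [Fintype Z] (O : S → Z) (P R : S → Act → S → ℝ)
    (G : Set S) :
    ℕ → (S → ℝ) → Z → ℝ
  | 0, _, _ => 0
  | n+1, b, z =>
    if ∀ s, 0 < b s → s ∈ G then 0
    else maxOver (obsEnabled O P z) fun α =>
      ∑ z' ∈ univ.filter (fun z' => 0 < Pbo O P b α z'),
        Pbo O P b α z' * (Rbel O P R b α z' + Vopt O P R G n (succB O P b α z') z')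

/-- The `n`-step minimal values `U_n` on the underlying fully observable MDP. -/
def Umin [Fintype S] [Fintype Act] (P R : S → Act → S → ℝ) (G : Set S) : ℕ → S → ℝ
  | 0, _ => 0
  | n+1, s =>
    if s ∈ G then 0
    else minOver (enabledA P s) fun α =>
      ∑ s' : S, P s α s' * (R s α s' + Umin P R G n s')

end



section Aux
set_option linter.unusedSectionVars false

variable {S Act Z : Type} [Fintype S] [Fintype Act] [Fintype Z]

lemma le_maxOver {α : Type} {t : Finset α} {f : α → ℝ} {a : α} (h : a ∈ t) :
    f a ≤ maxOver t f := by
  rw [maxOver, dif_pos ⟨a, h⟩]; exact Finset.le_sup' f h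

lemma minOver_le {α : Type} {t : Finset α} {f : α → ℝ} {a : α} (h : a ∈ t) :
    minOver t f ≤ f a := by
  rw [minOver, dif_pos ⟨a, h⟩]; exact Finset.inf'_le f h

lemma maxOver_exists {α : Type} {t : Finset α} (h : t.Nonempty) (f : α → ℝ) :
    ∃ a ∈ t, maxOver t f = f a := by
  rw [maxOver, dif_pos h]; exact Finset.exists_mem_eq_sup' h f

lemma maxOver_nonneg {α : Type} {t : Finset α} {f : α → ℝ} (h : ∀ a ∈ t, 0 ≤ f a) :
    0 ≤ maxOver t f := by
  rw [maxOver]; split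
  · rename_i hne
    obtain ⟨a, ha⟩ := hne
    exact le_trans (h a ha) (Finset.le_sup' f ha)
  · exact le_refl 0

lemma minOver_nonneg {α : Type} {t : Finset α} {f : α → ℝ} (h : ∀ a ∈ t, 0 ≤ f a) :
    0 ≤ minOver t f := by
  rw [minOver]; split
  · exact Finset.le_inf' _ _ h
  · exact le_refl 0

variable (O : S → Z) (P R : S → Act → S → ℝ) (G : Set S)

/-- expected one-step reward restricted to observation `z`. -/
noncomputable def rfun (s : S) (α : Act) (z : Z) : ℝ :=
  ∑ s' : S, if O s' = z then R s α s' * P s α s' else 0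

/-- numerator of the successor belief. -/
noncomputable def numer (b : S → ℝ) (α : Act) (s' : S) : ℝ := ∑ s : S, b s * P s α s'

variable {O P R}

lemma Pso_nonneg (hP : ∀ s α s', 0 ≤ P s α s') (s : S) (α : Act) (z : Z) :
    0 ≤ Pso O P s α z := by
  refine Finset.sum_nonneg fun s' _ => ?_
  split
  · exact hP s α s'
  · exact le_refl 0

lemma rfun_nonneg (hP : ∀ s α s', 0 ≤ P s α s') (hR : ∀ s α s', 0 ≤ R s α s')
    (s : S) (α : Act) (z : Z) : 0 ≤ rfun O P R s α z := by
  refine Finset.sum_nonneg fun s' _ => ?_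
  split
  · exact mul_nonneg (hR s α s') (hP s α s')
  · exact le_refl 0

lemma Pbo_nonneg (hP : ∀ s α s', 0 ≤ P s α s') {b : S → ℝ} (hb : ∀ s, 0 ≤ b s)
    (α : Act) (z : Z) : 0 ≤ Pbo O P b α z :=
  Finset.sum_nonneg fun s _ => mul_nonneg (hb s) (Pso_nonneg hP s α z)

lemma numer_sum_fiber (b : S → ℝ) (α : Act) (z : Z) :
    ∑ s' : S, (if O s' = z then numer P b α s' else 0) = Pbo O P b α z := by
  rw [Pbo]
  have : ∀ s : S, b s * Pso O P s α z
      = ∑ s' : S, if O s' = z then b s * P s α s' else 0 := by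
    intro s
    rw [Pso, Finset.mul_sum]
    exact Finset.sum_congr rfl fun s' _ => by split <;> simp
  rw [Finset.sum_congr rfl fun s _ => this s, Finset.sum_comm]
  refine Finset.sum_congr rfl fun s' _ => ?_
  rw [numer]
  split <;> simp

lemma sum_fiber (g : S → ℝ) : ∑ s' : S, g s' = ∑ z' : Z, ∑ s' : S, if O s' = z' then g s' else 0 := by
  rw [Finset.sum_comm]
  refine Finset.sum_congr rfl fun s' _ => ?_
  simp

lemma Pbo_zero_term (hP : ∀ s α s', 0 ≤ P s α s') {b : S → ℝ} (hb : ∀ s, 0 ≤ b s)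
    {α : Act} {z : Z} (hz : Pbo O P b α z = 0) :
    ∀ s s', O s' = z → b s * P s α s' = 0 := by
  intro s s' ho
  have h1 : ∀ t ∈ (univ : Finset S), 0 ≤ b t * Pso O P t α z :=
    fun t _ => mul_nonneg (hb t) (Pso_nonneg hP t α z)
  have h2 : b s * Pso O P s α z = 0 :=
    (Finset.sum_eq_zero_iff_of_nonneg h1).1 hz s (mem_univ s)
  have h3 : ∑ t : S, b s * (if O t = z then P s α t else 0) = 0 := by
    rw [← Finset.mul_sum]; exact h2
  have h4 : ∀ t ∈ (univ : Finset S), 0 ≤ b s * (if O t = z then P s α t else 0) := by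
    intro t _
    refine mul_nonneg (hb s) ?_
    split
    · exact hP s α t
    · exact le_refl 0
  have := (Finset.sum_eq_zero_iff_of_nonneg h4).1 h3 s' (mem_univ s')
  rwa [if_pos ho] at this

lemma maxOver_mono {α : Type} {t : Finset α} {f g : α → ℝ} (h : ∀ a ∈ t, f a ≤ g a) :
    maxOver t f ≤ maxOver t g := by
  rw [maxOver, maxOver]
  split
  · exact Finset.sup'_mono_fun h
  · exact le_refl 0

lemma minOver_mono {α : Type} {t : Finset α} {f g : α → ℝ} (h : ∀ a ∈ t, f a ≤ g a) :
    minOver t f ≤ minOver t g := by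
  rw [minOver, minOver]
  split
  · exact Finset.le_inf' _ _ fun a ha => le_trans (Finset.inf'_le f ha) (h a ha)
  · exact le_refl 0

lemma succB_nonneg (hP : ∀ s α s', 0 ≤ P s α s') {b : S → ℝ} (hb : ∀ s, 0 ≤ b s)
    (α : Act) (z : Z) (s : S) : 0 ≤ succB O P b α z s := by
  rw [succB]
  split
  · exact div_nonneg (Finset.sum_nonneg fun s' _ => mul_nonneg (hb s') (hP s' α s))
      (Pbo_nonneg hP hb α z)
  · exact le_refl 0

lemma succB_isBelief (hP : ∀ s α s', 0 ≤ P s α s') {b : S → ℝ} (hb : ∀ s, 0 ≤ b s)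
    {α : Act} {z : Z} (hz : 0 < Pbo O P b α z) : IsBelief (succB O P b α z) := by
  refine ⟨succB_nonneg hP hb α z, ?_⟩
  have : ∀ s : S, succB O P b α z s = (if O s = z then numer P b α s else 0) / Pbo O P b α z := by
    intro s
    rw [succB, numer]
    split <;> simp
  rw [Finset.sum_congr rfl fun s _ => this s, ← Finset.sum_div, numer_sum_fiber,
    div_self (ne_of_gt hz)]

lemma succB_hasObs (b : S → ℝ) (α : Act) (z : Z) : HasObs O (succB O P b α z) z := by
  intro s hs
  by_contra h
  rw [succB, if_neg h] at hs
  exact lt_irrefl 0 hs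

lemma Rbel_nonneg (hP : ∀ s α s', 0 ≤ P s α s') (hR : ∀ s α s', 0 ≤ R s α s')
    {b : S → ℝ} (hb : ∀ s, 0 ≤ b s) (α : Act) (z : Z) : 0 ≤ Rbel O P R b α z := by
  refine div_nonneg (Finset.sum_nonneg fun s _ => mul_nonneg (hb s) ?_) (Pbo_nonneg hP hb α z)
  exact rfun_nonneg hP hR s α z

lemma Pbo_mul_Rbel {b : S → ℝ} {α : Act} {z : Z} (hz : Pbo O P b α z ≠ 0) :
    Pbo O P b α z * Rbel O P R b α z = ∑ s : S, b s * rfun O P R s α z := by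
  rw [Rbel, mul_div_cancel₀ _ hz]
  rfl

lemma mem_enabledA {s : S} {α : Act} : α ∈ enabledA P s ↔ ∑ s' : S, P s α s' = 1 := by
  rw [enabledA, Finset.mem_filter]
  simp

lemma obsEnabled_eq (hM : IsPOMDP O P) {s : S} {z : Z} (h : O s = z) :
    obsEnabled O P z = enabledA P s := by
  have hex : ∃ t, O t = z := ⟨s, h⟩
  rw [obsEnabled, dif_pos hex]
  exact hM.2.2.2 hex.choose s (hex.choose_spec.trans h.symm)

lemma obsEnabled_nonempty (hM : IsPOMDP O P) {s : S} {z : Z} (h : O s = z) :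
    (obsEnabled O P z).Nonempty := by
  rw [obsEnabled_eq hM h]
  exact hM.2.2.1 s

lemma Umin_nonneg (hP : ∀ s α s', 0 ≤ P s α s') (hR : ∀ s α s', 0 ≤ R s α s') :
    ∀ n s, 0 ≤ Umin P R G n s := by
  intro n
  induction n with
  | zero => intro s; exact le_refl 0
  | succ n ih =>
    intro s
    rw [Umin]
    split
    · exact le_refl 0
    · refine minOver_nonneg fun α _ => Finset.sum_nonneg fun s' _ =>
        mul_nonneg (hP s α s') (add_nonneg (hR s α s') (ih s'))

lemma Vopt_nonneg (hP : ∀ s α s', 0 ≤ P s α s') (hR : ∀ s α s', 0 ≤ R s α s') :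
    ∀ n (b : S → ℝ) (z : Z), (∀ s, 0 ≤ b s) → 0 ≤ Vopt O P R G n b z := by
  intro n
  induction n with
  | zero => intro b z _; exact le_refl 0
  | succ n ih =>
    intro b z hb
    rw [Vopt]
    split
    · exact le_refl 0
    · refine maxOver_nonneg fun α _ => Finset.sum_nonneg fun z' hz' => ?_
      refine mul_nonneg (Pbo_nonneg hP hb α z') (add_nonneg (Rbel_nonneg hP hR hb α z') ?_)
      exact ih _ z' (succB_nonneg hP hb α z')

lemma Umin_mono (hP : ∀ s α s', 0 ≤ P s α s') (hR : ∀ s α s', 0 ≤ R s α s') :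
    ∀ n s, Umin P R G n s ≤ Umin P R G (n + 1) s := by
  intro n
  induction n with
  | zero => intro s; exact Umin_nonneg G hP hR 1 s
  | succ n ih =>
    intro s
    rw [Umin, Umin]
    split
    · exact le_refl 0
    · refine minOver_mono fun α _ => Finset.sum_le_sum fun s' _ => ?_
      exact mul_le_mul_of_nonneg_left (by linarith [ih s']) (hP s α s')

lemma Vopt_mono (hP : ∀ s α s', 0 ≤ P s α s') (hR : ∀ s α s', 0 ≤ R s α s') :
    ∀ n (b : S → ℝ) (z : Z), (∀ s, 0 ≤ b s) →
      Vopt O P R G n b z ≤ Vopt O P R G (n + 1) b z := by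
  intro n
  induction n with
  | zero => intro b z hb; exact Vopt_nonneg G hP hR 1 b z hb
  | succ n ih =>
    intro b z hb
    rw [Vopt, Vopt]
    split
    · exact le_refl 0
    · refine maxOver_mono fun α _ => Finset.sum_le_sum fun z' hz' => ?_
      refine mul_le_mul_of_nonneg_left ?_ (Pbo_nonneg hP hb α z')
      have := ih (succB O P b α z') z' (succB_nonneg hP hb α z')
      linarith


lemma numer_nonneg (hP : ∀ s α s', 0 ≤ P s α s') {ν : S → ℝ} (hν : ∀ s, 0 ≤ ν s)
    (α : Act) (s' : S) : 0 ≤ numer P ν α s' :=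
  Finset.sum_nonneg fun s _ => mul_nonneg (hν s) (hP s α s')

lemma numer_mono (hP : ∀ s α s', 0 ≤ P s α s') {ν c : S → ℝ} (hν : ∀ s, ν s ≤ c s)
    (α : Act) (s' : S) : numer P ν α s' ≤ numer P c α s' :=
  Finset.sum_le_sum fun s _ => mul_le_mul_of_nonneg_right (hν s) (hP s α s')

/-- Lemma A: weighted minimal MDP values are below the optimal belief value. -/
lemma lemA (hM : IsPOMDP O P) (hR : ∀ s α s', 0 ≤ R s α s') :
    ∀ n (c ν : S → ℝ) (z : Z), IsBelief c → HasObs O c z →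
      (∀ s, 0 ≤ ν s ∧ ν s ≤ c s) →
      ∑ s : S, ν s * Umin P R G n s ≤ Vopt O P R G n c z := by
  have hP := hM.1
  intro n
  induction n with
  | zero => intro c ν z _ _ _; simp [Umin, Vopt]
  | succ n ih =>
    intro c ν z hc hobs hν
    rw [Vopt]
    split
    · rename_i hgoal
      refine le_of_eq (Finset.sum_eq_zero fun s _ => ?_)
      rcases eq_or_lt_of_le (hν s).1 with h0 | h0
      · rw [← h0, zero_mul]
      · have hcs : 0 < c s := lt_of_lt_of_le h0 (hν s).2
        rw [Umin, if_pos (hgoal s hcs), mul_zero]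
    · rename_i hgoal
      push_neg at hgoal
      obtain ⟨s₀, hcs₀, hs₀G⟩ := hgoal
      have hz₀ : O s₀ = z := hobs s₀ hcs₀
      obtain ⟨α, hα⟩ := obsEnabled_nonempty hM hz₀
      refine le_trans ?_ (le_maxOver hα)
      -- step 1: bound by the one-step unfolding at action α
      have hUnn := Umin_nonneg G hP hR
      have step1 : ∑ s : S, ν s * Umin P R G (n + 1) s ≤
          ∑ s : S, ν s * ∑ s' : S, P s α s' * (R s α s' + Umin P R G n s') := by
        refine Finset.sum_le_sum fun s _ => ?_
        rcases eq_or_lt_of_le (hν s).1 with h0 | h0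
        · rw [← h0, zero_mul, zero_mul]
        · have hcs : 0 < c s := lt_of_lt_of_le h0 (hν s).2
          have hαs : α ∈ enabledA P s := by
            rwa [obsEnabled_eq hM (hobs s hcs)] at hα
          refine mul_le_mul_of_nonneg_left ?_ (le_of_lt h0)
          rw [Umin]
          split
          · exact Finset.sum_nonneg fun s' _ =>
              mul_nonneg (hP s α s') (add_nonneg (hR s α s') (hUnn n s'))
          · exact minOver_le hαs
      refine le_trans step1 ?_
      -- step 2: partition over observations
      set T : Z → ℝ := fun z' => ∑ s : S, ∑ s' : S,
        if O s' = z' then ν s * (P s α s' * (R s α s' + Umin P R G n s')) else 0 with hT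
      have step2 : ∑ s : S, ν s * ∑ s' : S, P s α s' * (R s α s' + Umin P R G n s') =
          ∑ z' : Z, T z' := by
        have h1 : ∀ s : S, ν s * ∑ s' : S, P s α s' * (R s α s' + Umin P R G n s') =
            ∑ z' : Z, ∑ s' : S,
              if O s' = z' then ν s * (P s α s' * (R s α s' + Umin P R G n s')) else 0 := by
          intro s
          rw [Finset.mul_sum]
          exact sum_fiber (fun s' => ν s * (P s α s' * (R s α s' + Umin P R G n s')))
        rw [Finset.sum_congr rfl fun s _ => h1 s, Finset.sum_comm]
      rw [step2]
      -- step 3: restrict to observations with positive probability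
      have step3 : ∑ z' : Z, T z' =
          ∑ z' ∈ univ.filter (fun z' => 0 < Pbo O P c α z'), T z' := by
        symm
        refine Finset.sum_subset (Finset.filter_subset _ _) ?_
        intro z' _ hz'
        have hnotpos : ¬ 0 < Pbo O P c α z' := by simpa using hz'
        have hPbo0 : Pbo O P c α z' = 0 :=
          le_antisymm (not_lt.1 hnotpos) (Pbo_nonneg hP hc.1 α z')
        refine Finset.sum_eq_zero fun s _ => Finset.sum_eq_zero fun s' _ => ?_
        split
        · rename_i ho
          have hcP : c s * P s α s' = 0 := Pbo_zero_term hP hc.1 hPbo0 s s' ho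
          have hνP : ν s * P s α s' = 0 := by
            refine le_antisymm ?_ (mul_nonneg (hν s).1 (hP s α s'))
            calc ν s * P s α s' ≤ c s * P s α s' :=
                  mul_le_mul_of_nonneg_right (hν s).2 (hP s α s')
              _ = 0 := hcP
          have : ν s * (P s α s' * (R s α s' + Umin P R G n s')) =
              (ν s * P s α s') * (R s α s' + Umin P R G n s') := by ring
          rw [this, hνP, zero_mul]
        · rfl
      rw [step3]
      -- step 4: per-observation bound
      refine Finset.sum_le_sum fun z' hz'mem => ?_
      have hPbo : 0 < Pbo O P c α z' := (Finset.mem_filter.1 hz'mem).2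
      have hsplit : T z' = (∑ s : S, ν s * rfun O P R s α z') +
          ∑ s' : S, (if O s' = z' then numer P ν α s' else 0) * Umin P R G n s' := by
        have h2 : ∀ (s s' : S),
            (if O s' = z' then ν s * (P s α s' * (R s α s' + Umin P R G n s')) else 0) =
            (if O s' = z' then ν s * (R s α s' * P s α s') else 0) +
            (if O s' = z' then (ν s * P s α s') * Umin P R G n s' else 0) := by
          intro s s'
          split
          · ring
          · rw [add_zero]
        rw [hT]
        simp only [h2, Finset.sum_add_distrib]
        congr 1
        · refine Finset.sum_congr rfl fun s _ => ?_
          rw [rfun, Finset.mul_sum]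
          exact Finset.sum_congr rfl fun s' _ => by split <;> simp
        · rw [Finset.sum_comm]
          refine Finset.sum_congr rfl fun s' _ => ?_
          split
          · rw [numer, Finset.sum_mul]
          · simp
      rw [hsplit]
      have hTR : ∑ s : S, ν s * rfun O P R s α z' ≤
          Pbo O P c α z' * Rbel O P R c α z' := by
        rw [Pbo_mul_Rbel (ne_of_gt hPbo)]
        exact Finset.sum_le_sum fun s _ =>
          mul_le_mul_of_nonneg_right (hν s).2 (rfun_nonneg hP hR s α z')
      have hTU : ∑ s' : S, (if O s' = z' then numer P ν α s' else 0) * Umin P R G n s' ≤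
          Pbo O P c α z' * Vopt O P R G n (succB O P c α z') z' := by
        set ν' : S → ℝ := fun s' =>
          if O s' = z' then numer P ν α s' / Pbo O P c α z' else 0 with hν'
        have hne := ne_of_gt hPbo
        have hid : ∀ s' : S, (if O s' = z' then numer P ν α s' else 0) =
            Pbo O P c α z' * ν' s' := by
          intro s'
          simp only [hν']
          split_ifs with h
          · field_simp
          · rw [mul_zero]
        have hb' : ∀ s', 0 ≤ ν' s' ∧ ν' s' ≤ succB O P c α z' s' := by
          intro s'
          simp only [hν', succB]
          split_ifs with h
          · constructor
            · exact div_nonneg (numer_nonneg hP (fun s => (hν s).1) α s') (le_of_lt hPbo)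
            · have hn : numer P ν α s' ≤ ∑ s'' : S, c s'' * P s'' α s' :=
                numer_mono hP (fun s => (hν s).2) α s'
              gcongr
          · exact ⟨le_refl 0, le_refl 0⟩
        have := ih (succB O P c α z') ν' z' (succB_isBelief hP hc.1 hPbo)
          (succB_hasObs c α z') hb'
        calc ∑ s' : S, (if O s' = z' then numer P ν α s' else 0) * Umin P R G n s'
            = Pbo O P c α z' * ∑ s' : S, ν' s' * Umin P R G n s' := by
              rw [Finset.mul_sum]
              exact Finset.sum_congr rfl fun s' _ => by rw [hid s', mul_assoc]
          _ ≤ Pbo O P c α z' * Vopt O P R G n (succB O P c α z') z' :=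
              mul_le_mul_of_nonneg_left this (le_of_lt hPbo)
      rw [mul_add]
      exact add_le_add hTR hTU


/-- Lemma B: the finite-step belief clipping inequality. -/
lemma lemB (hM : IsPOMDP O P) (hR : ∀ s α s', 0 ≤ R s α s') :
    ∀ n (b μ : S → ℝ) (z : Z), IsBelief b → HasObs O b z → IsBeliefClip b μ →
      (1 - ∑ s : S, μ s) * Vopt O P R G n (clipped b μ) z +
        ∑ s : S, μ s * Umin P R G n s ≤ Vopt O P R G n b z := by
  have hP := hM.1
  intro n
  induction n with
  | zero => intro b μ z _ _ _; simp [Umin, Vopt]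
  | succ n ih =>
    intro b μ z hb hobs hμ
    have hδ : 0 < 1 - ∑ s : S, μ s := by linarith [hμ.2]
    have hbtn : ∀ s, 0 ≤ clipped b μ s := fun s =>
      div_nonneg (by linarith [(hμ.1 s).2]) hδ.le
    have hbts : ∑ s : S, clipped b μ s = 1 := by
      unfold clipped
      rw [← Finset.sum_div, Finset.sum_sub_distrib, hb.2, div_self (ne_of_gt hδ)]
    have hbtb : IsBelief (clipped b μ) := ⟨hbtn, hbts⟩
    have hbtpos : ∀ s, 0 < clipped b μ s → 0 < b s := by
      intro s hs
      rcases lt_or_eq_of_le (hb.1 s) with h | h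
      · exact h
      · exfalso
        have hμ0 : μ s = 0 := le_antisymm (h ▸ (hμ.1 s).2) (hμ.1 s).1
        rw [clipped] at hs
        simp only [← h, hμ0, sub_zero] at hs
        simp at hs
    have hobst : HasObs O (clipped b μ) z := fun s hs => hobs s (hbtpos s hs)
    have hdecomp : ∀ s, b s = (1 - ∑ s : S, μ s) * clipped b μ s + μ s := by
      intro s
      unfold clipped
      rw [mul_comm, div_mul_cancel₀ _ (ne_of_gt hδ)]
      ring
    have hUnn := Umin_nonneg G hP hR
    have hVnn := Vopt_nonneg (O := O) (R := R) G hP hR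
    simp only [Vopt]
    by_cases hgoal : ∀ s, 0 < b s → s ∈ G
    · rw [if_pos hgoal, if_pos fun s hs => hgoal s (hbtpos s hs)]
      rw [mul_zero, zero_add]
      refine le_of_eq (Finset.sum_eq_zero fun s _ => ?_)
      rcases eq_or_lt_of_le (hμ.1 s).1 with h0 | h0
      · rw [← h0, zero_mul]
      · have hbs : 0 < b s := lt_of_lt_of_le h0 (hμ.1 s).2
        rw [Umin, if_pos (hgoal s hbs), mul_zero]
    · rw [if_neg hgoal]
      push_neg at hgoal
      obtain ⟨s₀, hbs₀, hs₀G⟩ := hgoal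
      have hz₀ : O s₀ = z := hobs s₀ hbs₀
      -- the per-action claim
      have claim : ∀ α ∈ obsEnabled O P z,
          (1 - ∑ s : S, μ s) *
              (∑ z' ∈ univ.filter (fun z' => 0 < Pbo O P (clipped b μ) α z'),
                Pbo O P (clipped b μ) α z' *
                  (Rbel O P R (clipped b μ) α z' +
                    Vopt O P R G n (succB O P (clipped b μ) α z') z')) +
            ∑ s : S, μ s * Umin P R G (n + 1) s ≤
          ∑ z' ∈ univ.filter (fun z' => 0 < Pbo O P b α z'),
            Pbo O P b α z' * (Rbel O P R b α z' + Vopt O P R G n (succB O P b α z') z') := by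
        intro α hα
        -- step 1: unfold the μ-weighted U values at action α
        have step1 : ∑ s : S, μ s * Umin P R G (n + 1) s ≤
            ∑ s : S, μ s * ∑ s' : S, P s α s' * (R s α s' + Umin P R G n s') := by
          refine Finset.sum_le_sum fun s _ => ?_
          rcases eq_or_lt_of_le (hμ.1 s).1 with h0 | h0
          · rw [← h0, zero_mul, zero_mul]
          · have hbs : 0 < b s := lt_of_lt_of_le h0 (hμ.1 s).2
            have hαs : α ∈ enabledA P s := by rwa [obsEnabled_eq hM (hobs s hbs)] at hα
            refine mul_le_mul_of_nonneg_left ?_ (le_of_lt h0)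
            rw [Umin]
            split
            · exact Finset.sum_nonneg fun s' _ =>
                mul_nonneg (hP s α s') (add_nonneg (hR s α s') (hUnn n s'))
            · exact minOver_le hαs
        -- step 2: partition over observations
        set T : Z → ℝ := fun z' => ∑ s : S, ∑ s' : S,
          if O s' = z' then μ s * (P s α s' * (R s α s' + Umin P R G n s')) else 0 with hT
        have step2 : ∑ s : S, μ s * ∑ s' : S, P s α s' * (R s α s' + Umin P R G n s') =
            ∑ z' : Z, T z' := by
          have h1 : ∀ s : S, μ s * ∑ s' : S, P s α s' * (R s α s' + Umin P R G n s') =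
              ∑ z' : Z, ∑ s' : S,
                if O s' = z' then μ s * (P s α s' * (R s α s' + Umin P R G n s')) else 0 := by
            intro s
            rw [Finset.mul_sum]
            exact sum_fiber (fun s' => μ s * (P s α s' * (R s α s' + Umin P R G n s')))
          rw [Finset.sum_congr rfl fun s _ => h1 s, Finset.sum_comm]
        -- step 3: restrict to observations with positive probability under b
        have step3 : ∑ z' : Z, T z' =
            ∑ z' ∈ univ.filter (fun z' => 0 < Pbo O P b α z'), T z' := by
          symm
          refine Finset.sum_subset (Finset.filter_subset _ _) ?_
          intro z' _ hz'
          have hPbo0 : Pbo O P b α z' = 0 :=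
            le_antisymm (not_lt.1 (by simpa using hz')) (Pbo_nonneg hP hb.1 α z')
          refine Finset.sum_eq_zero fun s _ => Finset.sum_eq_zero fun s' _ => ?_
          split
          · rename_i ho
            have hbP : b s * P s α s' = 0 := Pbo_zero_term hP hb.1 hPbo0 s s' ho
            have hμP : μ s * P s α s' = 0 := by
              refine le_antisymm ?_ (mul_nonneg (hμ.1 s).1 (hP s α s'))
              calc μ s * P s α s' ≤ b s * P s α s' :=
                    mul_le_mul_of_nonneg_right (hμ.1 s).2 (hP s α s')
                _ = 0 := hbP
            have heq : μ s * (P s α s' * (R s α s' + Umin P R G n s')) =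
                (μ s * P s α s') * (R s α s' + Umin P R G n s') := by ring
            rw [heq, hμP, zero_mul]
          · rfl
        -- decompositions of Pbo and numer along b = δ·b̃ + μ
        have hdecPbo : ∀ z', Pbo O P b α z' =
            (1 - ∑ s : S, μ s) * Pbo O P (clipped b μ) α z' + Pbo O P μ α z' := by
          intro z'
          rw [Pbo, Pbo, Pbo, Finset.mul_sum, ← Finset.sum_add_distrib]
          refine Finset.sum_congr rfl fun s _ => ?_
          rw [hdecomp s]
          ring
        have hdecnum : ∀ s', numer P b α s' =
            (1 - ∑ s : S, μ s) * numer P (clipped b μ) α s' + numer P μ α s' := by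
          intro s'
          rw [numer, numer, numer, Finset.mul_sum, ← Finset.sum_add_distrib]
          refine Finset.sum_congr rfl fun s _ => ?_
          rw [hdecomp s]
          ring
        -- extend the b̃-filtered sum to the b-filter
        have hsub : univ.filter (fun z' => 0 < Pbo O P (clipped b μ) α z') ⊆
            univ.filter (fun z' => 0 < Pbo O P b α z') := by
          intro z' hz'
          rw [Finset.mem_filter] at hz' ⊢
          refine ⟨mem_univ _, ?_⟩
          have h1 := hdecPbo z'
          have h2 : 0 ≤ Pbo O P μ α z' := Pbo_nonneg hP (fun s => (hμ.1 s).1) α z'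
          nlinarith [hz'.2]
        have hext : ∑ z' ∈ univ.filter (fun z' => 0 < Pbo O P (clipped b μ) α z'),
              Pbo O P (clipped b μ) α z' *
                (Rbel O P R (clipped b μ) α z' +
                  Vopt O P R G n (succB O P (clipped b μ) α z') z') =
            ∑ z' ∈ univ.filter (fun z' => 0 < Pbo O P b α z'),
              Pbo O P (clipped b μ) α z' *
                (Rbel O P R (clipped b μ) α z' +
                  Vopt O P R G n (succB O P (clipped b μ) α z') z') := by
          refine Finset.sum_subset hsub fun z' _ hz' => ?_
          have : Pbo O P (clipped b μ) α z' = 0 :=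
            le_antisymm (not_lt.1 (by simpa using hz')) (Pbo_nonneg hP hbtn α z')
          rw [this, zero_mul]
        -- per-observation bound
        have perz' : ∀ z' ∈ univ.filter (fun z' => 0 < Pbo O P b α z'),
            (1 - ∑ s : S, μ s) * (Pbo O P (clipped b μ) α z' *
                (Rbel O P R (clipped b μ) α z' +
                  Vopt O P R G n (succB O P (clipped b μ) α z') z')) + T z' ≤
            Pbo O P b α z' * (Rbel O P R b α z' + Vopt O P R G n (succB O P b α z') z') := by
          intro z' hz'mem
          have hPbo : 0 < Pbo O P b α z' := (Finset.mem_filter.1 hz'mem).2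
          have hsplitT : T z' = (∑ s : S, μ s * rfun O P R s α z') +
              ∑ s' : S, (if O s' = z' then numer P μ α s' else 0) * Umin P R G n s' := by
            have h2 : ∀ (s s' : S),
                (if O s' = z' then μ s * (P s α s' * (R s α s' + Umin P R G n s')) else 0) =
                (if O s' = z' then μ s * (R s α s' * P s α s') else 0) +
                (if O s' = z' then (μ s * P s α s') * Umin P R G n s' else 0) := by
              intro s s'
              split
              · ring
              · rw [add_zero]
            rw [hT]
            simp only [h2, Finset.sum_add_distrib]
            congr 1
            · refine Finset.sum_congr rfl fun s _ => ?_
              rw [rfun, Finset.mul_sum]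
              exact Finset.sum_congr rfl fun s' _ => by split <;> simp
            · rw [Finset.sum_comm]
              refine Finset.sum_congr rfl fun s' _ => ?_
              split
              · rw [numer, Finset.sum_mul]
              · simp
          set ν' : S → ℝ := fun s' =>
            if O s' = z' then numer P μ α s' / Pbo O P b α z' else 0 with hν'
          have hν'sum : ∑ s' : S, ν' s' = Pbo O P μ α z' / Pbo O P b α z' := by
            rw [← numer_sum_fiber (b := μ) (α := α) (z := z'), Finset.sum_div]
            refine Finset.sum_congr rfl fun s' _ => ?_
            simp only [hν']
            split <;> simp
          have hν'bd : ∀ s', 0 ≤ ν' s' ∧ ν' s' ≤ succB O P b α z' s' := by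
            intro s'
            simp only [hν', succB]
            split_ifs with h
            · refine ⟨div_nonneg (numer_nonneg hP (fun s => (hμ.1 s).1) α s') hPbo.le, ?_⟩
              have hn : numer P μ α s' ≤ ∑ s'' : S, b s'' * P s'' α s' :=
                numer_mono hP (fun s => (hμ.1 s).2) α s'
              gcongr
            · exact ⟨le_refl 0, le_refl 0⟩
          have hid : ∀ s' : S, (if O s' = z' then numer P μ α s' else 0) =
              Pbo O P b α z' * ν' s' := by
            intro s'
            simp only [hν']
            split_ifs with h
            · field_simp
            · rw [mul_zero]
          by_cases hpos : 0 < Pbo O P (clipped b μ) α z'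
          · -- positive case: apply the induction hypothesis via a successor clip
            have hone : 1 - ∑ x : S, ν' x =
                (1 - ∑ s : S, μ s) * Pbo O P (clipped b μ) α z' / Pbo O P b α z' := by
              rw [hν'sum, eq_div_iff (ne_of_gt hPbo), sub_mul, one_mul,
                div_mul_cancel₀ _ (ne_of_gt hPbo)]
              linarith [hdecPbo z']
            have hν'lt : ∑ x : S, ν' x < 1 := by
              have h0 : 0 < (1 - ∑ s : S, μ s) * Pbo O P (clipped b μ) α z' /
                  Pbo O P b α z' := div_pos (mul_pos hδ hpos) hPbo
              linarith
            have hclip : IsBeliefClip (succB O P b α z') ν' := ⟨hν'bd, hν'lt⟩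
            have hkey : clipped (succB O P b α z') ν' = succB O P (clipped b μ) α z' := by
              funext s'
              by_cases h : O s' = z'
              · have e1 : succB O P b α z' s' = numer P b α s' / Pbo O P b α z' := by
                  rw [succB, if_pos h]; rfl
                have e2 : succB O P (clipped b μ) α z' s' =
                    numer P (clipped b μ) α s' / Pbo O P (clipped b μ) α z' := by
                  rw [succB, if_pos h]; rfl
                have e3 : ν' s' = numer P μ α s' / Pbo O P b α z' := by
                  simp only [hν', if_pos h]
                rw [clipped, e1, e3, e2, hone]
                have hd := hdecnum s'
                field_simp
                linear_combination hd
              · have e1 : succB O P b α z' s' = 0 := by rw [succB, if_neg h]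
                have e2 : succB O P (clipped b μ) α z' s' = 0 := by rw [succB, if_neg h]
                have e3 : ν' s' = 0 := by simp only [hν', if_neg h]
                rw [clipped, e1, e3, e2, sub_zero, zero_div]
            have hih := ih (succB O P b α z') ν' z' (succB_isBelief hP hb.1 hPbo)
              (succB_hasObs b α z') hclip
            rw [hkey] at hih
            have hmul1 : Pbo O P b α z' * (1 - ∑ x : S, ν' x) =
                (1 - ∑ s : S, μ s) * Pbo O P (clipped b μ) α z' := by
              rw [hone, mul_div_assoc', mul_comm, mul_div_assoc,
                div_self (ne_of_gt hPbo), mul_one]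
            have hmul2 : Pbo O P b α z' * ∑ s' : S, ν' s' * Umin P R G n s' =
                ∑ s' : S, (if O s' = z' then numer P μ α s' else 0) * Umin P R G n s' := by
              rw [Finset.mul_sum]
              exact (Finset.sum_congr rfl fun s' _ => by rw [hid s', mul_assoc]).symm
            have hihmul : (1 - ∑ s : S, μ s) * Pbo O P (clipped b μ) α z' *
                  Vopt O P R G n (succB O P (clipped b μ) α z') z' +
                ∑ s' : S, (if O s' = z' then numer P μ α s' else 0) * Umin P R G n s' ≤
                Pbo O P b α z' * Vopt O P R G n (succB O P b α z') z' := by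
              have h := mul_le_mul_of_nonneg_left hih hPbo.le
              rw [mul_add, ← mul_assoc, hmul1, hmul2] at h
              exact h
            have hrew : Pbo O P b α z' * Rbel O P R b α z' =
                (1 - ∑ s : S, μ s) *
                  (Pbo O P (clipped b μ) α z' * Rbel O P R (clipped b μ) α z') +
                ∑ s : S, μ s * rfun O P R s α z' := by
              rw [Pbo_mul_Rbel (ne_of_gt hPbo), Pbo_mul_Rbel (ne_of_gt hpos),
                Finset.mul_sum, ← Finset.sum_add_distrib]
              refine Finset.sum_congr rfl fun s _ => ?_
              rw [hdecomp s]
              ring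
            rw [hsplitT]
            have hex1 : (1 - ∑ s : S, μ s) * (Pbo O P (clipped b μ) α z' *
                  (Rbel O P R (clipped b μ) α z' +
                    Vopt O P R G n (succB O P (clipped b μ) α z') z')) =
                (1 - ∑ s : S, μ s) *
                  (Pbo O P (clipped b μ) α z' * Rbel O P R (clipped b μ) α z') +
                (1 - ∑ s : S, μ s) * Pbo O P (clipped b μ) α z' *
                  Vopt O P R G n (succB O P (clipped b μ) α z') z' := by ring
            have hex2 : Pbo O P b α z' *
                (Rbel O P R b α z' + Vopt O P R G n (succB O P b α z') z') =
                Pbo O P b α z' * Rbel O P R b α z' +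
                Pbo O P b α z' * Vopt O P R G n (succB O P b α z') z' := by ring
            linarith
          · -- zero case: use Lemma A
            have hbt0 : Pbo O P (clipped b μ) α z' = 0 :=
              le_antisymm (not_lt.1 hpos) (Pbo_nonneg hP hbtn α z')
            have hrewle : ∑ s : S, μ s * rfun O P R s α z' ≤
                Pbo O P b α z' * Rbel O P R b α z' := by
              rw [Pbo_mul_Rbel (ne_of_gt hPbo)]
              exact Finset.sum_le_sum fun s _ =>
                mul_le_mul_of_nonneg_right (hμ.1 s).2 (rfun_nonneg hP hR s α z')
            have hA := lemA G hM hR n (succB O P b α z') ν' z'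
              (succB_isBelief hP hb.1 hPbo) (succB_hasObs b α z') hν'bd
            have hUle : ∑ s' : S, (if O s' = z' then numer P μ α s' else 0) *
                  Umin P R G n s' ≤
                Pbo O P b α z' * Vopt O P R G n (succB O P b α z') z' := by
              calc ∑ s' : S, (if O s' = z' then numer P μ α s' else 0) * Umin P R G n s'
                  = Pbo O P b α z' * ∑ s' : S, ν' s' * Umin P R G n s' := by
                    rw [Finset.mul_sum]
                    exact Finset.sum_congr rfl fun s' _ => by rw [hid s', mul_assoc]
                _ ≤ _ := mul_le_mul_of_nonneg_left hA hPbo.le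
            rw [hsplitT, hbt0, zero_mul, mul_zero, zero_add]
            have hexp : Pbo O P b α z' *
                (Rbel O P R b α z' + Vopt O P R G n (succB O P b α z') z') =
                Pbo O P b α z' * Rbel O P R b α z' +
                Pbo O P b α z' * Vopt O P R G n (succB O P b α z') z' := by ring
            linarith
        calc (1 - ∑ s : S, μ s) *
              (∑ z' ∈ univ.filter (fun z' => 0 < Pbo O P (clipped b μ) α z'),
                Pbo O P (clipped b μ) α z' *
                  (Rbel O P R (clipped b μ) α z' +
                    Vopt O P R G n (succB O P (clipped b μ) α z') z')) +
              ∑ s : S, μ s * Umin P R G (n + 1) s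
            ≤ (1 - ∑ s : S, μ s) *
              (∑ z' ∈ univ.filter (fun z' => 0 < Pbo O P (clipped b μ) α z'),
                Pbo O P (clipped b μ) α z' *
                  (Rbel O P R (clipped b μ) α z' +
                    Vopt O P R G n (succB O P (clipped b μ) α z') z')) +
              ∑ z' ∈ univ.filter (fun z' => 0 < Pbo O P b α z'), T z' := by
              have h := step1
              rw [step2, step3] at h
              linarith
          _ = ∑ z' ∈ univ.filter (fun z' => 0 < Pbo O P b α z'),
                ((1 - ∑ s : S, μ s) * (Pbo O P (clipped b μ) α z' *
                  (Rbel O P R (clipped b μ) α z' +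
                    Vopt O P R G n (succB O P (clipped b μ) α z') z')) + T z') := by
              rw [hext, Finset.mul_sum, ← Finset.sum_add_distrib]
          _ ≤ ∑ z' ∈ univ.filter (fun z' => 0 < Pbo O P b α z'),
                Pbo O P b α z' *
                  (Rbel O P R b α z' + Vopt O P R G n (succB O P b α z') z') :=
              Finset.sum_le_sum perz'
      by_cases hgt : ∀ s, 0 < clipped b μ s → s ∈ G
      · rw [if_pos hgt, mul_zero, zero_add]
        obtain ⟨α, hα⟩ := obsEnabled_nonempty hM hz₀
        refine le_trans (le_trans ?_ (claim α hα)) (le_maxOver (f := fun α => ∑ z' ∈ univ.filter (fun z' => 0 < Pbo O P b α z'), Pbo O P b α z' * (Rbel O P R b α z' + Vopt O P R G n (succB O P b α z') z')) hα)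
        have : 0 ≤ (1 - ∑ s : S, μ s) *
            ∑ z' ∈ univ.filter (fun z' => 0 < Pbo O P (clipped b μ) α z'),
              Pbo O P (clipped b μ) α z' *
                (Rbel O P R (clipped b μ) α z' +
                  Vopt O P R G n (succB O P (clipped b μ) α z') z') := by
          refine mul_nonneg hδ.le (Finset.sum_nonneg fun z' _ => ?_)
          refine mul_nonneg (Pbo_nonneg hP hbtn α z')
            (add_nonneg (Rbel_nonneg hP hR hbtn α z') (hVnn n _ z' (succB_nonneg hP hbtn α z')))
        linarith
      · rw [if_neg hgt]
        obtain ⟨α, hα, hmax⟩ := maxOver_exists (obsEnabled_nonempty hM hz₀)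
          (fun α => ∑ z' ∈ univ.filter (fun z' => 0 < Pbo O P (clipped b μ) α z'),
            Pbo O P (clipped b μ) α z' *
              (Rbel O P R (clipped b μ) α z' +
                Vopt O P R G n (succB O P (clipped b μ) α z') z'))
        rw [hmax]
        exact le_trans (claim α hα) (le_maxOver (f := fun α => ∑ z' ∈ univ.filter (fun z' => 0 < Pbo O P b α z'), Pbo O P b α z' * (Rbel O P R b α z' + Vopt O P R G n (succB O P b α z') z')) hα)

end Aux

/-- limit form of the belief clipping lemma for nonnegative rewards, with
suprema taken in `[0,∞]`:
`(1 − Δ)·V*(b ⊖ μ) + ∑_s μ(s)·U*(s) ≤ V*(b)`. -/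
theorem stmt_19 {S Act Z : Type} [Fintype S] [Nonempty S] [Fintype Act] [Nonempty Act]
    [Fintype Z] [Nonempty Z]
    (O : S → Z) (P : S → Act → S → ℝ) (hM : IsPOMDP O P)
    (R : S → Act → S → ℝ) (G : Set S) (hR : ∀ s α s', 0 ≤ R s α s')
    (hG : ObservableGoal O G)
    (b μ : S → ℝ) (z : Z) (hb : IsBelief b) (hobs : HasObs O b z)
    (hμ : IsBeliefClip b μ) :
    ENNReal.ofReal (1 - ∑ s, μ s) *
        (⨆ n : ℕ, ENNReal.ofReal (Vopt O P R G n (clipped b μ) z)) +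
      ∑ s, ENNReal.ofReal (μ s) * ⨆ n : ℕ, ENNReal.ofReal (Umin P R G n s) ≤
      ⨆ n : ℕ, ENNReal.ofReal (Vopt O P R G n b z) := by
  have hP := hM.1
  have hδ : 0 < 1 - ∑ s : S, μ s := by linarith [hμ.2]
  have hbtn : ∀ s, 0 ≤ clipped b μ s := fun s =>
    div_nonneg (by linarith [(hμ.1 s).2]) hδ.le
  have hVnn := Vopt_nonneg (O := O) (R := R) G hP hR
  have hUnn := Umin_nonneg (P := P) (R := R) G hP hR
  have hVmono : Monotone fun n => ENNReal.ofReal (1 - ∑ s : S, μ s) *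
      ENNReal.ofReal (Vopt O P R G n (clipped b μ) z) := by
    refine monotone_nat_of_le_succ fun n => ?_
    exact mul_le_mul_of_nonneg_left (ENNReal.ofReal_le_ofReal
      (Vopt_mono (O := O) (R := R) G hP hR n (clipped b μ) z hbtn)) (zero_le)
  have hUmono : ∀ s, Monotone fun n =>
      ENNReal.ofReal (μ s) * ENNReal.ofReal (Umin P R G n s) := by
    intro s
    refine monotone_nat_of_le_succ fun n => ?_
    exact mul_le_mul_of_nonneg_left (ENNReal.ofReal_le_ofReal
      (Umin_mono (P := P) (R := R) G hP hR n s)) (zero_le)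
  calc ENNReal.ofReal (1 - ∑ s, μ s) *
        (⨆ n : ℕ, ENNReal.ofReal (Vopt O P R G n (clipped b μ) z)) +
      ∑ s, ENNReal.ofReal (μ s) * ⨆ n : ℕ, ENNReal.ofReal (Umin P R G n s)
      = (⨆ n : ℕ, ENNReal.ofReal (1 - ∑ s : S, μ s) *
          ENNReal.ofReal (Vopt O P R G n (clipped b μ) z)) +
        ∑ s : S, ⨆ n : ℕ, ENNReal.ofReal (μ s) * ENNReal.ofReal (Umin P R G n s) := by
        rw [ENNReal.mul_iSup]
        congr 1
        exact Finset.sum_congr rfl fun s _ => ENNReal.mul_iSup _ _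
    _ = (⨆ n : ℕ, ENNReal.ofReal (1 - ∑ s : S, μ s) *
          ENNReal.ofReal (Vopt O P R G n (clipped b μ) z)) +
        ⨆ n : ℕ, ∑ s : S, ENNReal.ofReal (μ s) * ENNReal.ofReal (Umin P R G n s) := by
        rw [ENNReal.finsetSum_iSup_of_monotone hUmono]
    _ = ⨆ n : ℕ, (ENNReal.ofReal (1 - ∑ s : S, μ s) *
          ENNReal.ofReal (Vopt O P R G n (clipped b μ) z) +
        ∑ s : S, ENNReal.ofReal (μ s) * ENNReal.ofReal (Umin P R G n s)) :=
        ENNReal.iSup_add_iSup_of_monotone hVmono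
          (fun n m hnm => Finset.sum_le_sum fun s _ => hUmono s hnm)
    _ ≤ ⨆ n : ℕ, ENNReal.ofReal (Vopt O P R G n b z) := by
        refine iSup_le fun n => le_iSup_of_le n ?_
        have h1 : ENNReal.ofReal (1 - ∑ s : S, μ s) *
            ENNReal.ofReal (Vopt O P R G n (clipped b μ) z) =
            ENNReal.ofReal ((1 - ∑ s : S, μ s) * Vopt O P R G n (clipped b μ) z) :=
          (ENNReal.ofReal_mul hδ.le).symm
        have h2 : ∑ s : S, ENNReal.ofReal (μ s) * ENNReal.ofReal (Umin P R G n s) =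
            ENNReal.ofReal (∑ s : S, μ s * Umin P R G n s) := by
          rw [ENNReal.ofReal_sum_of_nonneg fun s _ =>
            mul_nonneg (hμ.1 s).1 (hUnn n s)]
          exact Finset.sum_congr rfl fun s _ => (ENNReal.ofReal_mul (hμ.1 s).1).symm
        rw [h1, h2, ← ENNReal.ofReal_add
          (mul_nonneg hδ.le (hVnn n (clipped b μ) z hbtn))
          (Finset.sum_nonneg fun s _ => mul_nonneg (hμ.1 s).1 (hUnn n s))]
        exact ENNReal.ofReal_le_ofReal (lemB G hM hR n b μ z hb hobs hμ)
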